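/- For the modified EnvZ/OmpR network with positive rate constants k₁,…,k₁₆, at any positive steady state the concentration of OmpR-P is strictly bounded above by (k₁/k₂)·(k₃k₅/(k₄+k₅))·((k₁₄+k₁₅)/(k₁₃k₁₅)) and also by k₅·(k₁₁+k₁₂)/(k₁₀k₁₂); these bounds depend only on the rate constants. -/

import Mathlib

/-- for the modified EnvZ/OmpR network, at any positive steady
state `[OmpR-P] = S₆` is strictly bounded above by two expressions depending only
on the rate constants (Equation (14)). -/
theorem stmt16 (k₁ k₂ k₃ k₄ k₅ k₆ k₇ k₈ k₉ k₁₀ k₁₁ k₁₂ k₁₃ k₁₄ k₁₅ k₁₆ : ℝ)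
    (hk₁ : 0 < k₁) (hk₂ : 0 < k₂) (hk₃ : 0 < k₃) (hk₄ : 0 < k₄) (hk₅ : 0 < k₅)
    (hk₆ : 0 < k₆) (hk₇ : 0 < k₇) (hk₈ : 0 < k₈) (hk₉ : 0 < k₉) (hk₁₀ : 0 < k₁₀)
    (hk₁₁ : 0 < k₁₁) (hk₁₂ : 0 < k₁₂) (hk₁₃ : 0 < k₁₃) (hk₁₄ : 0 < k₁₄)
    (hk₁₅ : 0 < k₁₅) (hk₁₆ : 0 < k₁₆)
    (S₁ S₂ S₃ S₄ S₅ S₆ S₇ S₈ S₉ : ℝ)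
    (hS₁ : 0 < S₁) (hS₂ : 0 < S₂) (hS₃ : 0 < S₃) (hS₄ : 0 < S₄) (hS₅ : 0 < S₅)
    (hS₆ : 0 < S₆) (hS₇ : 0 < S₇) (hS₈ : 0 < S₈) (hS₉ : 0 < S₉)
    -- steady-state equations (15)–(23) of the modified EnvZ/OmpR system:
    (h₁ : k₆ * S₅ * S₉ - (k₇ + k₈) * S₁ + k₉ * S₄ * S₆ = 0)
    (h₂ : k₁₀ * S₆ * S₇ - (k₁₁ + k₁₂) * S₂ = 0)
    (h₃ : k₁₃ * S₆ * S₈ - (k₁₄ + k₁₅) * S₃ = 0)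
    (h₄ : k₁ * S₈ - (k₂ + k₃) * S₄ + k₄ * S₇ + k₈ * S₁ - k₉ * S₄ * S₆ = 0)
    (h₅ : k₇ * S₁ - k₆ * S₅ * S₉ + k₁₂ * S₂ + k₁₅ * S₃ + k₁₆ * S₆ = 0)
    (h₆ : k₈ * S₁ - k₉ * S₄ * S₆ - k₁₀ * S₆ * S₇ + k₁₁ * S₂
      - k₁₃ * S₆ * S₈ + k₁₄ * S₃ - k₁₆ * S₆ = 0)
    (h₇ : k₃ * S₄ - (k₄ + k₅) * S₇ - k₁₀ * S₆ * S₇ + (k₁₁ + k₁₂) * S₂ = 0)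
    (h₈ : k₂ * S₄ - k₁ * S₈ - k₁₃ * S₆ * S₈ + (k₁₄ + k₁₅) * S₃ = 0)
    (h₉ : k₅ * S₇ - k₆ * S₅ * S₉ + k₇ * S₁ = 0)
    :
    S₆ < (k₁ / k₂) * (k₃ * k₅ / (k₄ + k₅)) * ((k₁₄ + k₁₅) / (k₁₃ * k₁₅)) ∧
    S₆ < k₅ * (k₁₁ + k₁₂) / (k₁₀ * k₁₂) := by
  have a : (k₄ + k₅) * S₇ = k₃ * S₄ := by linarith
  have b : k₂ * S₄ = k₁ * S₈ := by linarith
  have c : k₅ * S₇ = k₁₂ * S₂ + k₁₅ * S₃ + k₁₆ * S₆ := by linarith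
  have key1 : k₁₅ * S₃ < k₅ * S₇ := by
    have := mul_pos hk₁₂ hS₂
    have := mul_pos hk₁₆ hS₆
    linarith
  have key2 : k₁₂ * S₂ < k₅ * S₇ := by
    have := mul_pos hk₁₅ hS₃
    have := mul_pos hk₁₆ hS₆
    linarith
  constructor
  · rw [show (k₁ / k₂) * (k₃ * k₅ / (k₄ + k₅)) * ((k₁₄ + k₁₅) / (k₁₃ * k₁₅))
        = (k₁ * (k₃ * k₅) * (k₁₄ + k₁₅)) / (k₂ * (k₄ + k₅) * (k₁₃ * k₁₅)) by
      field_simp, lt_div_iff₀ (by positivity)]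
    have L : S₆ * (k₂ * (k₄ + k₅) * (k₁₃ * k₁₅)) * S₈
        = (k₂ * (k₄ + k₅) * (k₁₄ + k₁₅)) * (k₁₅ * S₃) := by
      linear_combination (k₂ * (k₄ + k₅) * k₁₅) * h₃
    have R : k₁ * (k₃ * k₅) * (k₁₄ + k₁₅) * S₈
        = (k₂ * (k₄ + k₅) * (k₁₄ + k₁₅)) * (k₅ * S₇) := by
      linear_combination (-(k₃ * k₅ * (k₁₄ + k₁₅))) * b + (-(k₂ * k₅ * (k₁₄ + k₁₅))) * a
    refine (mul_lt_mul_iff_of_pos_right hS₈).mp ?_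
    rw [L, R]
    exact mul_lt_mul_of_pos_left key1 (by positivity)
  · rw [lt_div_iff₀ (by positivity)]
    have L : S₆ * (k₁₀ * k₁₂) * S₇ = (k₁₁ + k₁₂) * (k₁₂ * S₂) := by
      linear_combination k₁₂ * h₂
    refine (mul_lt_mul_iff_of_pos_right hS₇).mp ?_
    rw [L, show k₅ * (k₁₁ + k₁₂) * S₇ = (k₁₁ + k₁₂) * (k₅ * S₇) by ring]
    exact mul_lt_mul_of_pos_left key2 (by positivity)
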